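/- Let H be a subgroup of SU(2) with H ⊆ T ∪ wT, and suppose the commutator subgroup [H, H] equals μ_{2^n} for some n ≥ 1. Then there exists t ∈ T such that t H t⁻¹ = Q_{2^{n+2}}. -/

import Mathlib

open Matrix Complex
open ComplexConjugate
open scoped commutatorElement

noncomputable section

abbrev SU2 := Matrix.specialUnitaryGroup (Fin 2) ℂ

instance SU2.instGroup : Group SU2 :=
  { (inferInstance : Monoid SU2) with
    inv := fun A => ⟨star A.1, by
      rcases A.2 with ⟨hu, hd⟩
      refine ⟨⟨?_, ?_⟩, ?_⟩
      · simpa using hu.2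
      · simpa using hu.1
      · show (star A.1).det = 1
        rw [Matrix.star_eq_conjTranspose, Matrix.det_conjTranspose]
        simp [show A.1.det = 1 from hd]⟩
    inv_mul_cancel := fun A => Subtype.ext A.2.1.1 }

lemma w_mem : !![(0:ℂ), -1; 1, 0] ∈ Matrix.specialUnitaryGroup (Fin 2) ℂ := by
  rw [Matrix.mem_specialUnitaryGroup_iff, Matrix.mem_unitaryGroup_iff]
  constructor
  · ext i j
    fin_cases i <;> fin_cases j <;>
      simp [Matrix.mul_apply, Fin.sum_univ_two, Matrix.star_apply, Complex.star_def]
  · simp [Matrix.det_fin_two]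

def w : SU2 := ⟨!![(0:ℂ), -1; 1, 0], w_mem⟩

lemma xi_conj (m : ℕ) : (starRingEnd ℂ) (2 * Real.pi * Complex.I / m) =
    -(2 * Real.pi * Complex.I / m) := by
  simp [map_div₀, Complex.conj_I, Complex.conj_ofReal, map_ofNat]
  ring

lemma xi_conj_exp (m : ℕ) : (starRingEnd ℂ) (Complex.exp (2 * Real.pi * Complex.I / m)) =
    Complex.exp (-(2 * Real.pi * Complex.I / m)) := by
  rw [← Complex.exp_conj, xi_conj]

lemma xi_conj_exp' (m : ℕ) : (starRingEnd ℂ) (Complex.exp (-(2 * Real.pi * Complex.I / m))) =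
    Complex.exp (2 * Real.pi * Complex.I / m) := by
  rw [← Complex.exp_conj, map_neg, xi_conj, neg_neg]

lemma xi_mem (m : ℕ) :
    !![Complex.exp (2 * Real.pi * Complex.I / m), 0; 0,
       Complex.exp (-(2 * Real.pi * Complex.I / m))]
      ∈ Matrix.specialUnitaryGroup (Fin 2) ℂ := by
  rw [Matrix.mem_specialUnitaryGroup_iff, Matrix.mem_unitaryGroup_iff]
  have hstar : star (!![Complex.exp (2 * Real.pi * Complex.I / m), 0; 0,
       Complex.exp (-(2 * Real.pi * Complex.I / m))]) =
      !![Complex.exp (-(2 * Real.pi * Complex.I / m)), 0; 0,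
       Complex.exp (2 * Real.pi * Complex.I / m)] := by
    ext i j
    fin_cases i <;> fin_cases j <;>
      simp [Matrix.star_apply, Complex.star_def, xi_conj_exp m, xi_conj_exp' m]
  constructor
  · rw [hstar]
    ext i j
    fin_cases i <;> fin_cases j <;>
      simp [Matrix.mul_apply, Fin.sum_univ_two, ← Complex.exp_add]
  · simp [Matrix.det_fin_two, ← Complex.exp_add]

def ξ (m : ℕ) : SU2 :=
  ⟨!![Complex.exp (2 * Real.pi * Complex.I / m), 0; 0,
      Complex.exp (-(2 * Real.pi * Complex.I / m))], xi_mem m⟩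

/-- `μ m` : the cyclic subgroup of `SU2` generated by `ξ m`. -/
def μ (m : ℕ) : Subgroup SU2 := Subgroup.zpowers (ξ m)

/-- `genQ q` is the generalized quaternion group `Q_{2^{q+1}} ⊆ SU2`,
generated by `ξ_{2^q}` and `w`. -/
def genQ (q : ℕ) : Subgroup SU2 := Subgroup.closure {ξ (2 ^ q), w}

/-- Lower central series of a subgroup, as subgroups of the ambient group:
`lcs H k = Γ^{k+1}(H)`, so `lcs H 0 = Γ¹(H) = H` and `lcs H (k+1) = ⁅lcs H k, H⁆`. -/
def lcs {G : Type*} [Group G] (H : Subgroup G) : ℕ → Subgroup G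
  | 0 => H
  | (k + 1) => ⁅lcs H k, H⁆

/-- The set of diagonal matrices in `SU2`: the maximal torus `T`. -/
def Tset : Set SU2 :=
  {x | (x : Matrix (Fin 2) (Fin 2) ℂ) 0 1 = 0 ∧ (x : Matrix (Fin 2) (Fin 2) ℂ) 1 0 = 0}

/-- The set of anti-diagonal matrices in `SU2`: the coset `wT`. -/
def wTset : Set SU2 :=
  {x | (x : Matrix (Fin 2) (Fin 2) ℂ) 0 0 = 0 ∧ (x : Matrix (Fin 2) (Fin 2) ℂ) 1 1 = 0}

/-- `PU(2)`, the quotient of `SU(2)` by its center `{±I}`. -/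
abbrev PU2 := SU2 ⧸ Subgroup.center SU2

/-! ### Auxiliary infrastructure -/

lemma circ_mul_conj (z : Circle) : (z : ℂ) * conj (z : ℂ) = 1 := by
  rw [← Circle.coe_inv_eq_conj, ← Circle.coe_mul, mul_inv_cancel, Circle.coe_one]

lemma circ_conj_mul (z : Circle) : conj (z : ℂ) * (z : ℂ) = 1 := by
  rw [mul_comm]; exact circ_mul_conj z

lemma circ_inv_conj_inv (z : Circle) : ((z : ℂ))⁻¹ * (conj (z : ℂ))⁻¹ = 1 := by
  rw [← mul_inv, circ_mul_conj, inv_one]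

def Φ : Circle →* SU2 where
  toFun z := ⟨!![(z:ℂ), 0; 0, ((z⁻¹ : Circle) : ℂ)], by
    rw [Matrix.mem_specialUnitaryGroup_iff, Matrix.mem_unitaryGroup_iff]
    constructor
    · ext i j
      fin_cases i <;> fin_cases j <;>
        simp [Matrix.mul_apply, Fin.sum_univ_two, Matrix.star_apply, Complex.star_def,
          circ_mul_conj, circ_inv_conj_inv]
    · simp [Matrix.det_fin_two, Circle.coe_inv_eq_conj, circ_mul_conj]⟩
  map_one' := by
    apply Subtype.ext
    show _ = (1 : Matrix (Fin 2) (Fin 2) ℂ)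
    ext i j
    fin_cases i <;> fin_cases j <;> simp [Matrix.one_apply]
  map_mul' a b := by
    apply Subtype.ext
    show _ = _ * _
    ext i j
    fin_cases i <;> fin_cases j <;>
      simp [Matrix.mul_apply, Fin.sum_univ_two, mul_inv, mul_comm]

lemma Φ_coe (z : Circle) :
    ((Φ z : SU2) : Matrix (Fin 2) (Fin 2) ℂ) = !![(z:ℂ), 0; 0, ((z⁻¹ : Circle) : ℂ)] := rfl

lemma Φ_coe_inv (z : Circle) :
    (((Φ z)⁻¹ : SU2) : Matrix (Fin 2) (Fin 2) ℂ) = !![((z⁻¹ : Circle) : ℂ), 0; 0, (z:ℂ)] := by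
  rw [← map_inv, Φ_coe]
  simp

lemma Φ_mem_T (z : Circle) : (Φ z : SU2) ∈ Tset := by
  constructor <;> simp [Φ_coe]

lemma Φ_inj : Function.Injective Φ := by
  intro a b h
  have := congrArg (fun x : SU2 => (x : Matrix (Fin 2) (Fin 2) ℂ) 0 0) h
  simpa [Φ_coe] using Circle.ext this

lemma wΦ_mem_wT (z : Circle) : (w * Φ z : SU2) ∈ wTset := by
  constructor <;>
    simp [wTset, Φ_coe, w, Matrix.mul_apply, Fin.sum_univ_two]

lemma rel1 (z : Circle) : Φ z * w = w * Φ (z⁻¹) := by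
  apply Subtype.ext
  show _ * _ = _ * _
  ext i j
  fin_cases i <;> fin_cases j <;>
    simp [Φ_coe, Φ_coe_inv, w, Matrix.mul_apply, Fin.sum_univ_two, Circle.coe_inv, inv_inv]

def negOne : Circle := Circle.exp Real.pi

lemma negOne_coe : (negOne : ℂ) = -1 := by
  simp [negOne, Circle.coe_exp, Complex.exp_pi_mul_I]

lemma negOne_mul_self : negOne * negOne = 1 := by
  ext
  push_cast [negOne_coe]
  norm_num

lemma negOne_inv : negOne⁻¹ = negOne := by
  rw [inv_eq_of_mul_eq_one_right negOne_mul_self]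

lemma w_sq : w * w = Φ negOne := by
  apply Subtype.ext
  show _ * _ = _
  ext i j
  fin_cases i <;> fin_cases j <;>
    simp [Φ_coe, Φ_coe_inv, w, Matrix.mul_apply, Fin.sum_univ_two, negOne_coe, negOne_inv, Circle.coe_inv]

lemma circle_eq {a b : Circle} (h : (a : ℂ) = b) : a = b := Circle.ext h

/-- Normal-form algebra: diag * anti. -/
lemma diag_mul_anti (z u : Circle) : Φ z * (w * Φ u) = w * Φ ((z⁻¹) * u) := by
  rw [← mul_assoc, rel1, mul_assoc, ← _root_.map_mul]

lemma anti_mul_diag (u z : Circle) : (w * Φ u) * Φ z = w * Φ (u * z) := by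
  rw [mul_assoc, ← _root_.map_mul]

lemma anti_mul_anti (a b : Circle) : (w * Φ a) * (w * Φ b) = Φ (negOne * (a⁻¹ * b)) := by
  rw [mul_assoc, ← mul_assoc (Φ a), rel1, ← mul_assoc, ← mul_assoc, w_sq,
    ← _root_.map_mul, ← _root_.map_mul, mul_assoc]

lemma anti_inv (a : Circle) : (w * Φ a)⁻¹ = w * Φ (negOne * a) := by
  apply inv_eq_of_mul_eq_one_right
  rw [anti_mul_anti, ← map_one Φ]
  congr 1
  ext
  push_cast [negOne_coe]
  field_simp

lemma diag_inv (a : Circle) : (Φ a)⁻¹ = Φ (a⁻¹) := (map_inv Φ a).symm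

/-- Every diagonal element of SU2 is `Φ z`. -/
lemma mem_T_exists {x : SU2} (hx : x ∈ Tset) : ∃ z : Circle, Φ z = x := by
  obtain ⟨h01, h10⟩ := hx
  have hu := x.2.1.2
  have h00 : (x : Matrix (Fin 2) (Fin 2) ℂ) 0 0 * conj ((x : Matrix (Fin 2) (Fin 2) ℂ) 0 0) = 1 := by
    have := congrFun (congrFun hu 0) 0
    simpa [Matrix.mul_apply, Fin.sum_univ_two, Matrix.star_apply, Complex.star_def, h01] using this
  have hdet : Matrix.det (x : Matrix (Fin 2) (Fin 2) ℂ) = 1 := (Matrix.mem_specialUnitaryGroup_iff.mp x.2).2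
  rw [Matrix.det_fin_two, h01, h10] at hdet
  simp only [mul_zero, sub_zero] at hdet
  have habs : ‖(x : Matrix (Fin 2) (Fin 2) ℂ) 0 0‖ = 1 := by
    have h1 : Complex.normSq ((x : Matrix (Fin 2) (Fin 2) ℂ) 0 0) = 1 := by
      have := (Complex.mul_conj ((x : Matrix (Fin 2) (Fin 2) ℂ) 0 0)).symm.trans h00
      exact_mod_cast this
    have := Complex.sq_norm ((x : Matrix (Fin 2) (Fin 2) ℂ) 0 0)
    nlinarith [norm_nonneg ((x : Matrix (Fin 2) (Fin 2) ℂ) 0 0)]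
  refine ⟨⟨(x : Matrix (Fin 2) (Fin 2) ℂ) 0 0,
    mem_sphere_zero_iff_norm.mpr (by exact habs)⟩, ?_⟩
  apply Subtype.ext
  show !![_, 0; 0, ((x : Matrix (Fin 2) (Fin 2) ℂ) 0 0)⁻¹] = (x : Matrix (Fin 2) (Fin 2) ℂ)
  ext i j
  have h11 : (x : Matrix (Fin 2) (Fin 2) ℂ) 1 1 = conj ((x : Matrix (Fin 2) (Fin 2) ℂ) 0 0) := by
    linear_combination conj ((x : Matrix (Fin 2) (Fin 2) ℂ) 0 0) * hdet
      - (x : Matrix (Fin 2) (Fin 2) ℂ) 1 1 * h00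
  have hinv : ((x : Matrix (Fin 2) (Fin 2) ℂ) 0 0)⁻¹ = conj ((x : Matrix (Fin 2) (Fin 2) ℂ) 0 0) :=
    inv_eq_of_mul_eq_one_right h00
  fin_cases i <;> fin_cases j <;>
    simp [Φ_coe, Circle.coe_inv, hinv, h01, h10, h11]

/-- Every anti-diagonal element of SU2 is `w * Φ z`. -/
lemma mem_wT_exists {x : SU2} (hx : x ∈ wTset) : ∃ z : Circle, w * Φ z = x := by
  obtain ⟨h00, h11⟩ := hx
  have hu := x.2.1.2
  have h10 : (x : Matrix (Fin 2) (Fin 2) ℂ) 1 0 * conj ((x : Matrix (Fin 2) (Fin 2) ℂ) 1 0) = 1 := by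
    have := congrFun (congrFun hu 1) 1
    simpa [Matrix.mul_apply, Fin.sum_univ_two, Matrix.star_apply, Complex.star_def, h11] using this
  have hdet : Matrix.det (x : Matrix (Fin 2) (Fin 2) ℂ) = 1 := (Matrix.mem_specialUnitaryGroup_iff.mp x.2).2
  rw [Matrix.det_fin_two, h00, h11] at hdet
  simp only [zero_mul, zero_sub, neg_eq_iff_eq_neg] at hdet
  -- hdet : x 0 1 * x 1 0 = -1
  have habs : ‖(x : Matrix (Fin 2) (Fin 2) ℂ) 1 0‖ = 1 := by
    have h1 : Complex.normSq ((x : Matrix (Fin 2) (Fin 2) ℂ) 1 0) = 1 := by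
      have := (Complex.mul_conj ((x : Matrix (Fin 2) (Fin 2) ℂ) 1 0)).symm.trans h10
      exact_mod_cast this
    have := Complex.sq_norm ((x : Matrix (Fin 2) (Fin 2) ℂ) 1 0)
    nlinarith [norm_nonneg ((x : Matrix (Fin 2) (Fin 2) ℂ) 1 0)]
  refine ⟨⟨(x : Matrix (Fin 2) (Fin 2) ℂ) 1 0,
    mem_sphere_zero_iff_norm.mpr (by exact habs)⟩, ?_⟩
  apply Subtype.ext
  show w.1 * !![_, 0; 0, ((x : Matrix (Fin 2) (Fin 2) ℂ) 1 0)⁻¹] = (x : Matrix (Fin 2) (Fin 2) ℂ)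
  have h01 : (x : Matrix (Fin 2) (Fin 2) ℂ) 0 1 = -conj ((x : Matrix (Fin 2) (Fin 2) ℂ) 1 0) := by
    linear_combination conj ((x : Matrix (Fin 2) (Fin 2) ℂ) 1 0) * hdet
      - (x : Matrix (Fin 2) (Fin 2) ℂ) 0 1 * h10
  have hinv : ((x : Matrix (Fin 2) (Fin 2) ℂ) 1 0)⁻¹ = conj ((x : Matrix (Fin 2) (Fin 2) ℂ) 1 0) :=
    inv_eq_of_mul_eq_one_right h10
  ext i j
  fin_cases i <;> fin_cases j <;>
    simp [Φ_coe, w, Matrix.mul_apply, Fin.sum_univ_two, Circle.coe_inv, hinv, h00, h11, h01]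

/-! ### Commutator identities -/

lemma conj_diag_diag (ν z : Circle) : Φ ν * Φ z * (Φ ν)⁻¹ = Φ z := by
  rw [← map_inv, ← _root_.map_mul, ← _root_.map_mul]
  congr 1
  rw [mul_comm ν z, mul_inv_cancel_right]

lemma conj_diag_anti (ν z : Circle) :
    Φ ν * (w * Φ z) * (Φ ν)⁻¹ = w * Φ (ν⁻¹ * z * ν⁻¹) := by
  rw [← map_inv, diag_mul_anti, anti_mul_diag, mul_assoc]

lemma anti_inv_mul (a b : Circle) : (w * Φ a)⁻¹ * (w * Φ b) = Φ (a⁻¹ * b) := by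
  rw [anti_inv, anti_mul_anti]
  congr 1
  ext
  have ha := Circle.coe_ne_zero a
  push_cast [negOne_coe]
  field_simp

lemma circle_sq_cases {a b : Circle} (h : a * a = b * b) : a = b ∨ a = negOne * b := by
  have hc : ((a:ℂ) - b) * ((a:ℂ) + b) = 0 := by
    have h' := congrArg (fun z : Circle => (z : ℂ)) h
    push_cast at h'
    linear_combination h'
  rcases mul_eq_zero.mp hc with h' | h'
  · exact Or.inl (Circle.ext (sub_eq_zero.mp h'))
  · right
    ext
    push_cast [negOne_coe]
    linear_combination h'

lemma comm_da (z u : Circle) : ⁅Φ z, w * Φ u⁆ = Φ z * Φ z := by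
  rw [commutatorElement_def, anti_inv, ← map_inv, diag_mul_anti, anti_mul_diag, anti_mul_anti,
    ← _root_.map_mul]
  congr 1
  ext
  have hz := Circle.coe_ne_zero z
  have hu := Circle.coe_ne_zero u
  push_cast [negOne_coe]
  field_simp

lemma comm_ad (u z : Circle) : ⁅w * Φ u, Φ z⁆ = Φ (z⁻¹) * Φ (z⁻¹) := by
  rw [commutatorElement_def, anti_inv, ← map_inv, anti_mul_diag, anti_mul_anti,
    ← _root_.map_mul, ← _root_.map_mul]
  congr 1
  ext
  have hz := Circle.coe_ne_zero z
  have hu := Circle.coe_ne_zero u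
  push_cast [negOne_coe]
  field_simp

lemma comm_aa (a b : Circle) : ⁅w * Φ a, w * Φ b⁆ = Φ (a⁻¹ * b) * Φ (a⁻¹ * b) := by
  rw [commutatorElement_def, anti_inv, anti_inv, anti_mul_anti, diag_mul_anti, anti_mul_anti,
    ← _root_.map_mul]
  congr 1
  ext
  have ha := Circle.coe_ne_zero a
  have hb := Circle.coe_ne_zero b
  push_cast [negOne_coe]
  field_simp

/-! ### The circle elements `em` -/

def emc (m : ℕ) : Circle := Circle.exp (2 * Real.pi / m)

lemma ξ_eq (m : ℕ) : ξ m = Φ (emc m) := by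
  have h : (2 * Real.pi * Complex.I / m) = ((2 * Real.pi / m : ℝ) : ℂ) * Complex.I := by
    push_cast; ring
  apply Subtype.ext
  ext i j
  fin_cases i <;> fin_cases j <;>
    simp [ξ, Φ_coe, emc, Circle.coe_exp, Circle.coe_inv, ← Complex.exp_neg, h]

lemma exp_npow (x : ℝ) (k : ℕ) : Circle.exp x ^ k = Circle.exp (k * x) := by
  induction k with
  | zero => simp
  | succ k ih =>
      rw [pow_succ, ih, ← Circle.exp_add]
      congr 1
      push_cast
      ring

lemma emc_sq (q : ℕ) : emc (2 ^ (q + 1)) * emc (2 ^ (q + 1)) = emc (2 ^ q) := by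
  have h2 : ((2:ℝ) ^ (q+1)) ≠ 0 := by positivity
  have h2' : ((2:ℝ) ^ q) ≠ 0 := by positivity
  simp only [emc]
  rw [← Circle.exp_add]
  congr 1
  push_cast
  field_simp
  ring

lemma emc_pow_negOne (q : ℕ) : emc (2 ^ (q + 1)) ^ (2 ^ q : ℕ) = negOne := by
  have h2 : ((2:ℝ) ^ (q+1)) ≠ 0 := by positivity
  simp only [emc]
  rw [exp_npow, negOne]
  congr 1
  push_cast
  field_simp
  ring

lemma xi_ne_one {n : ℕ} (hn : 1 ≤ n) : ξ (2 ^ n) ≠ 1 := by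
  intro h
  have h00 := congrArg (fun x : SU2 => (x : Matrix (Fin 2) (Fin 2) ℂ) 0 0) h
  have hexp : Complex.exp (2 * Real.pi * Complex.I / (2 ^ n : ℕ)) = 1 := by
    simpa [ξ] using h00
  rw [Complex.exp_eq_one_iff] at hexp
  obtain ⟨k, hk⟩ := hexp
  have hpow : ((2:ℂ) ^ n) ≠ 0 := pow_ne_zero _ two_ne_zero
  have hcast : ((2 ^ n : ℕ) : ℂ) = (2:ℂ) ^ n := by push_cast; ring
  rw [hcast, div_eq_iff hpow] at hk
  have h2pi : (2 * (Real.pi : ℂ) * Complex.I) ≠ 0 := by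
    simp [Real.pi_ne_zero, Complex.I_ne_zero]
  have h1 : (k : ℂ) * 2 ^ n = 1 := by
    apply mul_left_cancel₀ h2pi
    rw [mul_one]
    linear_combination -hk
  have hint : (k * 2 ^ n : ℤ) = 1 := by exact_mod_cast h1
  have hdvd : (2:ℤ) ∣ 1 := by
    rw [← hint]
    exact Dvd.dvd.mul_left (dvd_pow_self 2 (by omega : n ≠ 0)) k
  norm_num at hdvd

theorem stmt4 (H : Subgroup SU2) (hsub : (H : Set SU2) ⊆ Tset ∪ wTset) (n : ℕ) (hn : 1 ≤ n)
    (hcomm : ⁅H, H⁆ = μ (2 ^ n)) :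
    ∃ t ∈ Tset, Subgroup.map (MulAut.conj t).toMonoidHom H = genQ (n + 1) := by
  classical
  -- Step 1: H contains an anti-diagonal element.
  have hanti : ∃ a ∈ H, a ∈ wTset := by
    by_contra hno
    push_neg at hno
    have hbot : ⁅H, H⁆ ≤ ⊥ := by
      rw [Subgroup.commutator_le]
      intro g hg h hh
      obtain ⟨zg, rfl⟩ := mem_T_exists ((hsub hg).resolve_right (hno g hg))
      obtain ⟨zh, rfl⟩ := mem_T_exists ((hsub hh).resolve_right (hno h hh))
      rw [Subgroup.mem_bot, commutatorElement_eq_one_iff_commute]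
      show Φ zg * Φ zh = Φ zh * Φ zg
      rw [← _root_.map_mul, ← _root_.map_mul, mul_comm]
    rw [hcomm] at hbot
    exact xi_ne_one hn (Subgroup.mem_bot.mp (hbot (Subgroup.mem_zpowers _)))
  obtain ⟨a, haH, haw⟩ := hanti
  obtain ⟨α, hα⟩ := mem_wT_exists haw
  -- squares of diagonal elements of H are in μ (2 ^ n)
  have hsq : ∀ z : Circle, Φ z ∈ H → Φ z * Φ z ∈ μ (2 ^ n) := by
    intro z hz
    have hcm : ⁅Φ z, a⁆ ∈ ⁅H, H⁆ := Subgroup.commutator_mem_commutator hz haH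
    rw [hcomm] at hcm
    rwa [← hα, comm_da] at hcm
  -- Φ negOne ∈ H
  have hnegH : Φ negOne ∈ H := by
    have : Φ negOne = a * a := by
      rw [← hα, anti_mul_anti]
      congr 1
      rw [inv_mul_cancel, mul_one]
    rw [this]; exact mul_mem haH haH
  -- The subgroup of squares of diagonal elements of H.
  let S : Subgroup SU2 :=
    { carrier := {y | ∃ z : Circle, Φ z ∈ H ∧ y = Φ z * Φ z}
      mul_mem' := by
        rintro y1 y2 ⟨z1, h1, rfl⟩ ⟨z2, h2, rfl⟩
        refine ⟨z1 * z2, by rw [_root_.map_mul]; exact mul_mem h1 h2, ?_⟩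
        simp only [← _root_.map_mul]
        congr 1
        exact mul_mul_mul_comm z1 z1 z2 z2
      one_mem' := ⟨1, by simpa using one_mem H, by simp⟩
      inv_mem' := by
        rintro y ⟨z, hz, rfl⟩
        exact ⟨z⁻¹, by rw [map_inv]; exact inv_mem hz,
          by rw [map_inv, _root_.mul_inv_rev]⟩ }
  have hμS : μ (2 ^ n) ≤ S := by
    rw [← hcomm, Subgroup.commutator_le]
    intro g hg h hh
    rcases hsub hg with hgd | hga <;> rcases hsub hh with hhd | hha
    · obtain ⟨zg, rfl⟩ := mem_T_exists hgd
      obtain ⟨zh, rfl⟩ := mem_T_exists hhd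
      have : ⁅Φ zg, Φ zh⁆ = 1 := by
        rw [commutatorElement_eq_one_iff_commute]
        show Φ zg * Φ zh = Φ zh * Φ zg
        rw [← _root_.map_mul, ← _root_.map_mul, mul_comm]
      rw [this]; exact one_mem S
    · obtain ⟨zg, rfl⟩ := mem_T_exists hgd
      obtain ⟨zh, hzh⟩ := mem_wT_exists hha
      rw [← hzh, comm_da]
      exact ⟨zg, hg, rfl⟩
    · obtain ⟨zg, hzg⟩ := mem_wT_exists hga
      obtain ⟨zh, rfl⟩ := mem_T_exists hhd
      rw [← hzg, comm_ad]
      exact ⟨zh⁻¹, by rw [map_inv]; exact inv_mem hh, rfl⟩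
    · obtain ⟨zg, hzg⟩ := mem_wT_exists hga
      obtain ⟨zh, hzh⟩ := mem_wT_exists hha
      rw [← hzg, ← hzh, comm_aa]
      refine ⟨zg⁻¹ * zh, ?_, rfl⟩
      have : Φ (zg⁻¹ * zh) = g⁻¹ * h := by rw [← hzg, ← hzh, anti_inv_mul]
      rw [this]; exact mul_mem (inv_mem hg) hh
  -- extract a square root s = Φ σ of ξ (2 ^ n) inside H
  obtain ⟨σ, hσH, hσ2⟩ := hμS (Subgroup.mem_zpowers (ξ (2 ^ n)))
  -- σ = emc (2^(n+1)) or negOne * emc (2^(n+1))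
  have hσcases : σ = emc (2 ^ (n + 1)) ∨ σ = negOne * emc (2 ^ (n + 1)) := by
    apply circle_sq_cases
    apply Φ_inj
    rw [_root_.map_mul, _root_.map_mul, ← hσ2, ξ_eq, ← emc_sq n, _root_.map_mul]
  have hξ2H : ξ (2 ^ (n + 1)) ∈ H := by
    rw [ξ_eq]
    rcases hσcases with hcc | hcc
    · rw [← hcc]; exact hσH
    · have : Φ (emc (2 ^ (n + 1))) = Φ negOne * Φ σ := by
        rw [← _root_.map_mul]
        congr 1
        rw [hcc, ← mul_assoc, negOne_mul_self, one_mul]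
      rw [this]; exact mul_mem hnegH hσH
  -- all diagonal elements of H lie in μ (2 ^ (n + 1))
  have hξnegmem : Φ negOne ∈ μ (2 ^ (n + 1)) := by
    have : Φ negOne = ξ (2 ^ (n + 1)) ^ (2 ^ n : ℕ) := by
      rw [ξ_eq, ← map_pow, emc_pow_negOne n]
    rw [this]
    exact Subgroup.mem_zpowers_iff.mpr ⟨(2 ^ n : ℕ), by rw [zpow_natCast]⟩
  have hdiagμ : ∀ z : Circle, Φ z ∈ H → Φ z ∈ μ (2 ^ (n + 1)) := by
    intro z hz
    obtain ⟨k, hk⟩ := Subgroup.mem_zpowers_iff.mp (hsq z hz)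
    have hzz : z * z = emc (2 ^ (n + 1)) ^ k * emc (2 ^ (n + 1)) ^ k := by
      apply Φ_inj
      rw [_root_.map_mul, _root_.map_mul, _root_.map_zpow, ← hk, ξ_eq,
        ← emc_sq n, _root_.map_mul]
      exact ((Commute.refl _).mul_zpow k)
    have hmem : Φ (emc (2 ^ (n + 1)) ^ k) ∈ μ (2 ^ (n + 1)) := by
      rw [_root_.map_zpow, ← ξ_eq]
      exact Subgroup.mem_zpowers_iff.mpr ⟨k, rfl⟩
    rcases circle_sq_cases hzz with hcc | hcc
    · rw [hcc]; exact hmem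
    · rw [hcc, _root_.map_mul]
      exact mul_mem hξnegmem hmem
  -- the conjugating element
  set ν : Circle := Circle.exp (Complex.arg (α : ℂ) / 2) with hνdef
  have hν : ν * ν = α := by
    rw [hνdef, ← Circle.exp_add, add_halves]
    exact Circle.exp_arg α
  refine ⟨Φ ν, Φ_mem_T ν, ?_⟩
  have fapp : ∀ x : SU2, (MulAut.conj (Φ ν)).toMonoidHom x = Φ ν * x * (Φ ν)⁻¹ := fun x => rfl
  have hμQ : μ (2 ^ (n + 1)) ≤ genQ (n + 1) := by
    rw [μ, genQ]
    exact Subgroup.zpowers_le.mpr (Subgroup.subset_closure (Set.mem_insert _ _))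
  apply le_antisymm
  · intro y hy
    obtain ⟨h, hhH, rfl⟩ := Subgroup.mem_map.mp hy
    rw [fapp]
    rcases hsub hhH with hd | ha2
    · obtain ⟨z, rfl⟩ := mem_T_exists hd
      rw [conj_diag_diag]
      exact hμQ (hdiagμ z hhH)
    · obtain ⟨β, hβ⟩ := mem_wT_exists ha2
      have key : Φ ν * h * (Φ ν)⁻¹ = w * Φ (α⁻¹ * β) := by
        rw [← hβ, conj_diag_anti]
        congr 1
        rw [← hν]
        congr 1
        ext
        have hν0 := Circle.coe_ne_zero ν
        simp only [Circle.coe_mul, Circle.coe_inv]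
        field_simp
      rw [key]
      have hβH : Φ (α⁻¹ * β) ∈ H := by
        have : Φ (α⁻¹ * β) = a⁻¹ * h := by rw [← hα, ← hβ, anti_inv_mul]
        rw [this]; exact mul_mem (inv_mem haH) hhH
      exact mul_mem (Subgroup.subset_closure (Set.mem_insert_of_mem _ rfl))
        (hμQ (hdiagμ _ hβH))
  · rw [genQ, Subgroup.closure_le]
    intro x hx
    simp only [Set.mem_insert_iff, Set.mem_singleton_iff] at hx
    rcases hx with rfl | rfl
    · refine Subgroup.mem_map.mpr ⟨ξ (2 ^ (n + 1)), hξ2H, ?_⟩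
      rw [fapp, ξ_eq, conj_diag_diag]
    · refine Subgroup.mem_map.mpr ⟨a, haH, ?_⟩
      rw [fapp, ← hα, conj_diag_anti]
      have : ν⁻¹ * α * ν⁻¹ = 1 := by
        rw [← hν]
        ext
        have hν0 := Circle.coe_ne_zero ν
        simp only [Circle.coe_mul, Circle.coe_inv, Circle.coe_one]
        field_simp
      rw [this, _root_.map_one, mul_one]

end
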